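/- arXiv:1104.0636 — 5 statements merged into one kernel-verified Lean document; each statement's English description precedes it below -/
import Mathlib

section
/- Define χ^k_m(d_1,…,d_m) recursively by: χ^k_0 = k+1; χ^k_k(d_1,…,d_k) = d_1⋯d_k; and for 0 < m < k, χ^k_m(d_1,…,d_m) = d_m·χ^{k-1}_{m-1}(d_1,…,d_{m-1}) − (d_m−1)·χ^{k-1}_m(d_1,…,d_m). Then for all 1 ≤ d_1 ≤ d_2 ≤ ⋯ ≤ d_m, we have |χ^k_m(d_1,…,d_m)| ≤ C(k+1, m+1) · d_1⋯d_{m-1} · d_m^{k-m+1}. -/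
/-- The Euler characteristic `χ^k_m(d_1,…,d_m)` of a non-singular complete intersection of
hypersurfaces of degrees `d 1, …, d m` in `ℙ^k_ℂ`, defined by its recursion. -/
def chi : ℕ → ℕ → (ℕ → ℤ) → ℤ
  | k, 0, _ => (k : ℤ) + 1
  | 0, _ + 1, _ => 0
  | k + 1, m + 1, d =>
    if m + 1 = k + 1 then ∏ i ∈ Finset.Icc 1 (m + 1), d i
    else d (m + 1) * chi k m d - (d (m + 1) - 1) * chi k (m + 1) d

lemma one_le_prod_Icc (d : ℕ → ℤ) (m : ℕ) (h : ∀ i ∈ Finset.Icc 1 m, (1:ℤ) ≤ d i) :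
    1 ≤ ∏ i ∈ Finset.Icc 1 m, d i := by
  calc (1:ℤ) = ∏ _i ∈ Finset.Icc 1 m, 1 := by simp
  _ ≤ ∏ i ∈ Finset.Icc 1 m, d i := Finset.prod_le_prod (by simp) (by simpa using h)

lemma chi_aux : ∀ (k m : ℕ), m ≤ k → ∀ (d : ℕ → ℤ) (e : ℤ),
    (∀ i, i ≤ m → 1 ≤ d i) → (∀ i, i ≤ m → d i ≤ e) →
    |chi k m d| ≤ ((k + 1).choose (m + 1) : ℤ) * (∏ i ∈ Finset.Icc 1 m, d i) * e ^ (k - m) := by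
  intro k
  induction k with
  | zero =>
    intro m hm d e hd1 hde
    interval_cases m
    simp [chi]
  | succ k IH =>
    intro m hm d e hd1 hde
    have he : (1 : ℤ) ≤ e := le_trans (hd1 0 (Nat.zero_le _)) (hde 0 (Nat.zero_le _))
    match m, hm with
    | 0, _ =>
      have h1 : chi (k + 1) 0 d = (k : ℤ) + 2 := by simp [chi]; ring
      rw [h1, abs_of_nonneg (by positivity)]
      have h3 : Finset.Icc 1 0 = (∅ : Finset ℕ) := Finset.Icc_eq_empty (by omega)
      rw [h3, Finset.prod_empty, Nat.choose_one_right]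
      have h2 : (1:ℤ) ≤ e ^ (k + 1) := one_le_pow₀ he
      push_cast
      nlinarith [mul_le_mul_of_nonneg_left h2 (show (0:ℤ) ≤ (k:ℤ) + 2 by positivity)]
    | m + 1, hm =>
      by_cases hk : m + 1 = k + 1
      · -- top case: chi = product
        have h1 : chi (k + 1) (m + 1) d = ∏ i ∈ Finset.Icc 1 (m + 1), d i := by
          rw [chi, if_pos hk]
        rw [h1]
        have hp : (1:ℤ) ≤ ∏ i ∈ Finset.Icc 1 (m + 1), d i :=
          one_le_prod_Icc d (m+1) (fun i hi => hd1 i (Finset.mem_Icc.mp hi).2)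
        rw [abs_of_nonneg (by linarith)]
        have : k + 1 - (m + 1) = 0 := by omega
        rw [this, pow_zero, hk, Nat.choose_self]
        simp
      · have hmk : m + 1 < k + 1 := lt_of_le_of_ne hm hk
        have hd1' : ∀ i, i ≤ m → 1 ≤ d i := fun i hi => hd1 i (by omega)
        have hde' : ∀ i, i ≤ m → d i ≤ e := fun i hi => hde i (by omega)
        have hA := IH m (by omega) d e hd1' hde'
        have hB := IH (m + 1) (by omega) d e hd1 hde
        have h1 : chi (k + 1) (m + 1) d
            = d (m + 1) * chi k m d - (d (m + 1) - 1) * chi k (m + 1) d := by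
          rw [chi, if_neg hk]
        rw [h1]
        set A := chi k m d
        set B := chi k (m + 1) d
        set D := d (m + 1) with hD
        have hD1 : (1:ℤ) ≤ D := hd1 (m+1) le_rfl
        have hDe : D ≤ e := hde (m+1) le_rfl
        set P := ∏ i ∈ Finset.Icc 1 m, d i with hP
        have hP1 : (1:ℤ) ≤ P :=
          one_le_prod_Icc d m (fun i hi => hd1 i (by have := (Finset.mem_Icc.mp hi).2; omega))
        have hprod : ∏ i ∈ Finset.Icc 1 (m + 1), d i = P * D := by
          rw [hP, hD, Finset.prod_Icc_succ_top (by omega)]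
        -- exponents
        have hek : k - m = (k - (m + 1)) + 1 := by omega
        have hek2 : k + 1 - (m + 1) = k - m := by omega
        set X := e ^ (k - (m + 1)) with hX
        have hX0 : (1:ℤ) ≤ X := one_le_pow₀ he
        have hEX : e ^ (k - m) = X * e := by rw [hek, pow_succ]
        have habs : |D * A - (D - 1) * B| ≤ D * |A| + (D - 1) * |B| := by
          calc |D * A - (D - 1) * B| ≤ |D * A| + |(D - 1) * B| := abs_sub _ _
          _ = D * |A| + (D - 1) * |B| := by
              rw [abs_mul, abs_mul, abs_of_nonneg (by linarith : (0:ℤ) ≤ D),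
                abs_of_nonneg (by linarith : (0:ℤ) ≤ D - 1)]
        set C1 := ((k + 1).choose (m + 1) : ℤ)
        set C2 := ((k + 1).choose (m + 2) : ℤ)
        have hC : ((k + 1 + 1).choose (m + 1 + 1) : ℤ) = C1 + C2 := by
          simp only [C1, C2]
          push_cast [Nat.choose_succ_succ (k+1) (m+1)]
          ring
        have hC1 : (0:ℤ) ≤ C1 := by positivity
        have hC2 : (0:ℤ) ≤ C2 := by positivity
        rw [hC, hprod, hek2, hEX]
        rw [hEX] at hA
        rw [hprod] at hB
        have hA0 : (0:ℤ) ≤ |A| := abs_nonneg _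
        have hB0 : (0:ℤ) ≤ |B| := abs_nonneg _
        have t1 : D * |A| ≤ C1 * (P * D) * (X * e) := by
          calc D * |A| ≤ D * (C1 * P * (X * e)) := by
                exact mul_le_mul_of_nonneg_left hA (by linarith)
          _ = C1 * (P * D) * (X * e) := by ring
        have t2 : (D - 1) * |B| ≤ C2 * (P * D) * (X * e) := by
          have : |B| ≤ C2 * (P * D) * X := hB
          calc (D - 1) * |B| ≤ (D - 1) * (C2 * (P * D) * X) := by
                exact mul_le_mul_of_nonneg_left this (by linarith)
          _ ≤ e * (C2 * (P * D) * X) := by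
                have hnn : (0:ℤ) ≤ C2 * (P * D) * X := by positivity
                exact mul_le_mul_of_nonneg_right (by linarith) hnn
          _ = C2 * (P * D) * (X * e) := by ring
        calc |D * A - (D - 1) * B| ≤ D * |A| + (D - 1) * |B| := habs
        _ ≤ C1 * (P * D) * (X * e) + C2 * (P * D) * (X * e) := add_le_add t1 t2
        _ = (C1 + C2) * (P * D) * (X * e) := by ring

theorem stmt_0 (k m : ℕ) (hm : m ≤ k) (d : ℕ → ℤ)
    (hd1 : ∀ i, i ≤ m → 1 ≤ d i)
    (hmono : ∀ i j, i ≤ j → j ≤ m → d i ≤ d j) :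
    |chi k m d| ≤
      ((k + 1).choose (m + 1) : ℤ) * (∏ i ∈ Finset.Icc 1 (m - 1), d i) *
        d m ^ (k - m + 1) := by
  have hde : ∀ i, i ≤ m → d i ≤ d m := fun i hi => hmono i m hi le_rfl
  have key := chi_aux k m hm d (d m) hd1 hde
  have hdm : (1:ℤ) ≤ d m := hd1 m le_rfl
  match m, hm, key with
  | 0, hm, key =>
    -- key : ≤ C * (∏ Icc 1 0) * d0^(k-0); goal exponent k+1, prod Icc 1 (0-1)
    simp only [Nat.zero_sub, Nat.sub_zero] at *
    calc |chi k 0 d| ≤ ((k + 1).choose 1 : ℤ) * (∏ i ∈ Finset.Icc 1 0, d i) * d 0 ^ k := key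
    _ ≤ ((k + 1).choose 1 : ℤ) * (∏ i ∈ Finset.Icc 1 0, d i) * d 0 ^ (k + 1) := by
        have h0 : (0:ℤ) ≤ ((k + 1).choose 1 : ℤ) * (∏ i ∈ Finset.Icc 1 0, d i) := by
          rw [Finset.Icc_eq_empty (by omega), Finset.prod_empty]
          positivity
        exact mul_le_mul_of_nonneg_left (pow_le_pow_right₀ hdm (by omega)) h0
  | m + 1, hm, key =>
    have hprod : ∏ i ∈ Finset.Icc 1 (m + 1), d i
        = (∏ i ∈ Finset.Icc 1 m, d i) * d (m + 1) := by
      rw [Finset.prod_Icc_succ_top (by omega)]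
    have hexp : k - (m + 1) + 1 = k - m := by omega
    rw [hprod] at key
    have : ((k + 1).choose (m + 1 + 1) : ℤ) * (∏ i ∈ Finset.Icc 1 (m + 1 - 1), d i) *
        d (m + 1) ^ (k - (m + 1) + 1)
        = ((k + 1).choose (m + 1 + 1) : ℤ) * ((∏ i ∈ Finset.Icc 1 m, d i) * d (m + 1)) *
          d (m + 1) ^ (k - (m + 1)) := by
      simp only [Nat.add_sub_cancel]
      rw [pow_succ]
      ring
    rw [this]
    exact key
end

section
/- The number of connected components of the complement of an arrangement of n hyperplanes in general position in R^{k} equals ∑_{i=0}^{k} C(n, i). -/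
open Finset

def Realizes {V : Type} [AddCommGroup V] [Module ℝ V] {n : ℕ}
    (f : Fin n → V →ₗ[ℝ] ℝ) (c : Fin n → ℝ) (σ : Fin n → Bool) : Prop :=
  ∃ x : V, ∀ i, if σ i then c i < f i x else f i x < c i

lemma natCard_subtype {α : Type} [Fintype α] (P : α → Prop) [DecidablePred P] :
    Nat.card {x // P x} = (univ.filter P).card := by
  simp [Nat.card_eq_fintype_card, Fintype.card_subtype]

lemma bool_card_zero (P : Bool → Prop) [DecidablePred P] (h : ∀ b, ¬ P b) :
    (univ.filter P).card = 0 := by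
  simp [Finset.filter_eq_empty_iff.mpr (fun b _ => h b)]

lemma bool_card_one (P : Bool → Prop) [DecidablePred P] (h1 : ∃ b, P b)
    (h2 : ¬ (P true ∧ P false)) : (univ.filter P).card = 1 := by
  rw [Finset.card_filter, Fintype.sum_bool]
  obtain ⟨b, hb⟩ := h1
  cases b <;> by_cases ht : P true <;> by_cases hf : P false <;>
    simp_all

lemma bool_card_two (P : Bool → Prop) [DecidablePred P] (ht : P true) (hf : P false) :
    (univ.filter P).card = 2 := by
  rw [Finset.card_filter, Fintype.sum_bool]
  simp [ht, hf]

lemma indep_coeffs {n : ℕ} {M : Type*} [AddCommGroup M] [Module ℝ M] {v : Fin n → M}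
    {S : Finset (Fin n)} (h : LinearIndependent ℝ (fun i : S => v i))
    (b : Fin n → ℝ) (hb : ∀ j, j ∉ S → b j = 0) (hsum : (∑ j, b j • v j) = 0) :
    ∀ j, b j = 0 := by
  intro j
  by_cases hj : j ∈ S
  · have h1 : ∑ i : S, b i • v i = ∑ i ∈ S, b i • v i := Finset.sum_coe_sort S (fun i => b i • v i)
    have h2 : ∑ i ∈ S, b i • v i = ∑ i, b i • v i := by
      apply Finset.sum_subset (Finset.subset_univ S)
      intro x _ hx
      simp [hb x hx]
    have := Fintype.linearIndependent_iff.mp h (fun i : S => b i)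
      (by rw [h1, h2, hsum]) ⟨j, hj⟩
    exact this
  · exact hb j hj

lemma perturb {V : Type} [AddCommGroup V] [Module ℝ V] {n : ℕ}
    (f : Fin n → V →ₗ[ℝ] ℝ) (c : Fin n → ℝ) (τ : Fin n → Bool) (x v : V)
    (hx : ∀ i, if τ i then c i < f i x else f i x < c i) :
    ∃ ε : ℝ, 0 < ε ∧ ∀ t : ℝ, |t| ≤ ε →
      ∀ i, if τ i then c i < f i (x + t • v) else f i (x + t • v) < c i := by
  have hne : ∀ i, f i x ≠ c i := by
    intro i
    have := hx i
    by_cases h : τ i <;> simp [h] at this <;> linarith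
  set δ : Fin n → ℝ := fun i => |c i - f i x| / (|f i v| + 1) with hδ
  have hδpos : ∀ i, 0 < δ i := by
    intro i
    apply div_pos
    · rw [abs_pos, sub_ne_zero]; exact fun h => hne i h.symm
    · positivity
  obtain ⟨ε, hεpos, hεle⟩ : ∃ ε : ℝ, 0 < ε ∧ ∀ i, ε ≤ δ i := by
    refine ⟨(insert 1 (univ.image δ)).min' ⟨1, mem_insert_self _ _⟩, ?_, ?_⟩
    · have := Finset.min'_mem (insert 1 (univ.image δ)) ⟨1, mem_insert_self _ _⟩
      rcases Finset.mem_insert.mp this with h | h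
      · rw [h]; norm_num
      · obtain ⟨i, _, hi⟩ := Finset.mem_image.mp h
        rw [← hi]; exact hδpos i
    · intro i
      exact Finset.min'_le _ _ (Finset.mem_insert_of_mem (Finset.mem_image.mpr ⟨i, mem_univ i, rfl⟩))
  refine ⟨ε, hεpos, fun t ht i => ?_⟩
  have hkey : |t * f i v| < |c i - f i x| := by
    have h1 : |t * f i v| ≤ δ i * |f i v| := by
      rw [abs_mul]
      exact mul_le_mul_of_nonneg_right (le_trans ht (hεle i)) (abs_nonneg _)
    have h2 : δ i * |f i v| < |c i - f i x| := by
      rw [hδ]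
      have hd : (0:ℝ) < |f i v| + 1 := by positivity
      rw [div_mul_eq_mul_div, div_lt_iff₀ hd]
      have : 0 < |c i - f i x| := by
        rw [abs_pos, sub_ne_zero]; exact fun h => hne i h.symm
      nlinarith [abs_nonneg (f i v)]
    linarith
  have hfx : f i (x + t • v) = f i x + t * f i v := by
    simp [map_add, map_smul, smul_eq_mul]
  have habs := abs_lt.mp hkey
  by_cases h : τ i
  · have hlt : c i < f i x := by have := hx i; simpa [h] using this
    rw [if_pos h, hfx]
    rw [abs_of_nonpos (by linarith : c i - f i x ≤ 0)] at habs
    linarith [habs.1]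
  · have hlt : f i x < c i := by have := hx i; simpa [h] using this
    rw [if_neg h, hfx]
    rw [abs_of_nonneg (by linarith : (0:ℝ) ≤ c i - f i x)] at habs
    linarith [habs.2]

set_option maxHeartbeats 1000000 in
theorem count_realizes (k : ℕ) :
    ∀ (V : Type) [AddCommGroup V] [Module ℝ V] [FiniteDimensional ℝ V],
      Module.finrank ℝ V = k →
      ∀ (n : ℕ) (f : Fin n → V →ₗ[ℝ] ℝ) (c : Fin n → ℝ),
        (∀ S : Finset (Fin n), S.card ≤ k →
          LinearIndependent ℝ (fun i : S => f i) ∧ ∃ x, ∀ i ∈ S, f i x = c i) →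
        (∀ S : Finset (Fin n), S.card = k + 1 → ¬ ∃ x, ∀ i ∈ S, f i x = c i) →
        Nat.card {σ : Fin n → Bool // Realizes f c σ} =
          ∑ i ∈ Finset.range (k + 1), n.choose i := by
  induction k with
  | zero =>
    intro V _ _ _ hV n f c hgen hempty
    classical
    have hsub : Subsingleton V := Module.finrank_zero_iff.mp hV
    have hf0 : ∀ (i : Fin n) (x : V), f i x = 0 := by
      intro i x
      rw [Subsingleton.elim x 0, map_zero]
    have hc : ∀ i, c i ≠ 0 := by
      intro i hci
      exact hempty {i} (by simp) ⟨0, by simp [hf0, hci.symm]⟩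
    set σ0 : Fin n → Bool := fun i => decide (c i < 0) with hσ0
    have hiff : ∀ σ, Realizes f c σ ↔ σ = σ0 := by
      intro σ
      constructor
      · rintro ⟨x, hx⟩
        funext i
        have := hx i
        rw [hf0] at this
        cases hσ : σ i
        · simp only [hσ, Bool.false_eq_true, if_false] at this
          simp [hσ0, not_lt.mpr (le_of_lt this)]
        · simp only [hσ, if_true] at this
          simp [hσ0, this]
      · rintro rfl
        refine ⟨0, fun i => ?_⟩
        rw [hf0]
        by_cases h : c i < 0
        · simp [hσ0, h]
        · have : 0 < c i := lt_of_le_of_ne (not_lt.mp h) (Ne.symm (hc i))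
          simp [hσ0, not_lt.mpr (le_of_lt this), this]
    rw [natCard_subtype]
    have : univ.filter (Realizes f c) = {σ0} := by
      apply Finset.eq_singleton_iff_unique_mem.mpr
      constructor
      · simp only [Finset.mem_filter, Finset.mem_univ, true_and]
        exact (hiff σ0).mpr rfl
      · intro σ hσ
        simp only [Finset.mem_filter, Finset.mem_univ, true_and] at hσ
        exact (hiff σ).mp hσ
    rw [this]
    simp
  | succ k ih =>
    intro V instAG instM instFD hV n
    induction n with
    | zero =>
      intro f c hgen hempty
      classical
      rw [natCard_subtype]
      have h1 : univ.filter (Realizes f c) = univ := by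
        apply Finset.filter_true_of_mem
        intro σ _
        exact ⟨0, fun i => i.elim0⟩
      rw [h1]
      have h2 : ∑ i ∈ Finset.range (k + 1 + 1), Nat.choose 0 i = 1 := by
        rw [Finset.sum_eq_single 0]
        · rfl
        · intro b _ hb
          exact Nat.choose_eq_zero_of_lt (Nat.pos_of_ne_zero hb)
        · intro h; exact absurd (Finset.mem_range.mpr (Nat.succ_pos _)) h
      rw [h2]
      simp
    | succ n ihn =>
      intro f c hgen hempty
      classical
      -- distinguished hyperplane: index 0
      have h0card : ({0} : Finset (Fin (n+1))).card ≤ k + 1 := by simp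
      have hf0 : f 0 ≠ 0 := by
        have h := (hgen {0} h0card).1
        have := h.ne_zero ⟨0, by simp⟩
        simpa using this
      obtain ⟨w, hw⟩ : ∃ w, f 0 w ≠ 0 := by
        by_contra h
        push_neg at h
        exact hf0 (LinearMap.ext fun x => by rw [h x, LinearMap.zero_apply])
      set v1 : V := (f 0 w)⁻¹ • w with hv1def
      have hv1 : f 0 v1 = 1 := by
        rw [hv1def, map_smul, smul_eq_mul, inv_mul_cancel₀ hw]
      obtain ⟨x0, hx0⟩ : ∃ x0, f 0 x0 = c 0 := by
        obtain ⟨x, hx⟩ := (hgen {0} h0card).2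
        exact ⟨x, hx 0 (Finset.mem_singleton_self 0)⟩
      set f' : Fin n → V →ₗ[ℝ] ℝ := fun i => f i.succ with hf'
      set c' : Fin n → ℝ := fun i => c i.succ with hc'
      set g : Fin n → ((LinearMap.ker (f 0)) →ₗ[ℝ] ℝ) :=
        fun i => (f' i).comp (LinearMap.ker (f 0)).subtype with hg
      set d : Fin n → ℝ := fun i => c' i - f' i x0 with hd
      -- the basic geometric facts
      have hF5' : ∀ (τ : Fin n → Bool) (x : V),
          (∀ i, if τ i then c' i < f' i x else f' i x < c' i) → f 0 x = c 0 →
          Realizes g d τ := by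
        intro τ x hx h0
        have hker : x - x0 ∈ LinearMap.ker (f 0) := by
          rw [LinearMap.mem_ker, map_sub, h0, hx0, sub_self]
        refine ⟨⟨x - x0, hker⟩, fun i => ?_⟩
        have hgi : g i ⟨x - x0, hker⟩ = f' i x - f' i x0 := by
          simp [hg, map_sub]
        have := hx i
        by_cases h : τ i = true
        · rw [if_pos h] at this ⊢
          rw [hgi]
          simp only [hd]
          linarith
        · rw [if_neg h] at this ⊢
          rw [hgi]
          simp only [hd]
          linarith
      have hF5 : ∀ τ, Realizes g d τ →
          ∃ x, (∀ i, if τ i then c' i < f' i x else f' i x < c' i) ∧ f 0 x = c 0 := by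
        rintro τ ⟨v, hv⟩
        have hv0 : f 0 v.1 = 0 := v.2
        refine ⟨x0 + v.1, fun i => ?_, by rw [map_add, hx0, hv0, add_zero]⟩
        have hgi : f' i (x0 + v.1) = f' i x0 + g i v := by
          rw [map_add]; rfl
        have := hv i
        by_cases h : τ i = true
        · rw [if_pos h] at this ⊢
          rw [hgi]
          simp only [hd] at this
          linarith
        · rw [if_neg h] at this ⊢
          rw [hgi]
          simp only [hd] at this
          linarith
      have hF1 : ∀ (τ : Fin n → Bool) (b : Bool),
          Realizes f c (Fin.cons b τ) → Realizes f' c' τ := by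
        rintro τ b ⟨x, hx⟩
        refine ⟨x, fun i => ?_⟩
        have := hx i.succ
        rwa [Fin.cons_succ] at this
      have hRD : ∀ τ, Realizes g d τ → Realizes f' c' τ := by
        intro τ h
        obtain ⟨x, hx, _⟩ := hF5 τ h
        exact ⟨x, hx⟩
      have hF2 : ∀ τ : Fin n → Bool, Realizes f c (Fin.cons true τ) →
          Realizes f c (Fin.cons false τ) → Realizes g d τ := by
        rintro τ ⟨x, hx⟩ ⟨y, hy⟩
        have hx0' : c 0 < f 0 x := by
          have := hx 0
          simpa using this
        have hy0' : f 0 y < c 0 := by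
          have := hy 0
          simpa using this
        have hxs : ∀ i, if τ i then c' i < f' i x else f' i x < c' i := by
          intro i
          have := hx i.succ
          rwa [Fin.cons_succ] at this
        have hys : ∀ i, if τ i then c' i < f' i y else f' i y < c' i := by
          intro i
          have := hy i.succ
          rwa [Fin.cons_succ] at this
        set t : ℝ := (f 0 x - c 0) / (f 0 x - f 0 y) with htdef
        have hden : 0 < f 0 x - f 0 y := by linarith
        have ht0 : 0 < t := div_pos (by linarith) hden
        have ht1 : t < 1 := by
          rw [htdef, div_lt_one hden]; linarith
        have hne' : f 0 x - f 0 y ≠ 0 := ne_of_gt hden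
        have key : t * (f 0 y - f 0 x) = c 0 - f 0 x := by
          rw [htdef]
          field_simp
          ring
        have hz0 : f 0 (x + t • (y - x)) = c 0 := by
          rw [map_add, map_smul, map_sub, smul_eq_mul, key]
          ring
        refine hF5' τ (x + t • (y - x)) (fun i => ?_) hz0
        have hfz : f' i (x + t • (y - x)) = f' i x + t * (f' i y - f' i x) := by
          rw [map_add, map_smul, map_sub, smul_eq_mul]
        have h1 := hxs i
        have h2 := hys i
        by_cases h : τ i = true
        · rw [if_pos h] at h1 h2 ⊢
          rw [hfz]
          nlinarith
        · rw [if_neg h] at h1 h2 ⊢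
          rw [hfz]
          nlinarith
      have hF3 : ∀ τ : Fin n → Bool, Realizes g d τ →
          Realizes f c (Fin.cons true τ) ∧ Realizes f c (Fin.cons false τ) := by
        intro τ hτ
        obtain ⟨x, hxs, hx0'⟩ := hF5 τ hτ
        obtain ⟨ε, hε, hpert⟩ := perturb f' c' τ x v1 hxs
        constructor
        · refine ⟨x + ε • v1, fun j => ?_⟩
          refine Fin.cases ?_ (fun i => ?_) j
          · rw [Fin.cons_zero, if_pos rfl, map_add, map_smul, hv1, smul_eq_mul, mul_one, hx0']
            linarith
          · rw [Fin.cons_succ]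
            exact hpert ε (by rw [abs_of_pos hε]) i
        · refine ⟨x + (-ε) • v1, fun j => ?_⟩
          refine Fin.cases ?_ (fun i => ?_) j
          · rw [Fin.cons_zero, if_neg (by simp), map_add, map_smul, hv1, smul_eq_mul, mul_one, hx0']
            linarith
          · rw [Fin.cons_succ]
            exact hpert (-ε) (by rw [abs_neg, abs_of_pos hε]) i
      have hF4 : ∀ τ, Realizes f' c' τ → ¬ Realizes g d τ →
          ∃ b, Realizes f c (Fin.cons b τ) := by
        rintro τ ⟨x, hx⟩ hng
        have hne : f 0 x ≠ c 0 := fun h => hng (hF5' τ x hx h)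
        rcases lt_or_gt_of_ne hne with h | h
        · refine ⟨false, x, fun j => ?_⟩
          refine Fin.cases ?_ (fun i => ?_) j
          · rw [Fin.cons_zero, if_neg (by simp)]
            exact h
          · rw [Fin.cons_succ]
            exact hx i
        · refine ⟨true, x, fun j => ?_⟩
          refine Fin.cases ?_ (fun i => ?_) j
          · rw [Fin.cons_zero, if_pos rfl]
            exact h
          · rw [Fin.cons_succ]
            exact hx i
      -- the cardinality recursion
      have hsum : Nat.card {σ : Fin (n+1) → Bool // Realizes f c σ}
          = Nat.card {τ : Fin n → Bool // Realizes f' c' τ}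
            + Nat.card {τ : Fin n → Bool // Realizes g d τ} := by
        rw [natCard_subtype, natCard_subtype, natCard_subtype,
          Finset.card_filter, Finset.card_filter, Finset.card_filter]
        rw [← Equiv.sum_comp (Fin.consEquiv (fun _ => Bool))
          (fun σ => if Realizes f c σ then 1 else 0)]
        rw [Fintype.sum_prod_type]
        rw [Finset.sum_comm]
        rw [← Finset.sum_add_distrib]
        refine Finset.sum_congr rfl fun τ _ => ?_
        rw [Fintype.sum_bool]
        simp only [show ∀ b : Bool, (Fin.consEquiv fun _ => Bool) (b, τ) = Fin.cons b τ from
          fun b => rfl]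
        by_cases hτ : Realizes f' c' τ
        · by_cases hτg : Realizes g d τ
          · obtain ⟨h2t, h2f⟩ := hF3 τ hτg
            rw [if_pos h2t, if_pos h2f, if_pos hτ, if_pos hτg]
          · obtain ⟨b, hb⟩ := hF4 τ hτ hτg
            have hnot : ¬ (Realizes f c (Fin.cons true τ) ∧ Realizes f c (Fin.cons false τ)) :=
              fun h => hτg (hF2 τ h.1 h.2)
            rw [if_pos hτ, if_neg hτg]
            cases b
            · rw [if_pos hb, if_neg (fun h => hnot ⟨h, hb⟩)]
            · rw [if_pos hb, if_neg (fun h => hnot ⟨hb, h⟩)]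
        · have hτg : ¬ Realizes g d τ := fun h => hτ (hRD τ h)
          rw [if_neg (fun h => hτ (hF1 τ true h)), if_neg (fun h => hτ (hF1 τ false h)),
            if_neg hτ, if_neg hτg]
      -- hypotheses for the deleted arrangement
      have hgen' : ∀ S : Finset (Fin n), S.card ≤ k + 1 →
          LinearIndependent ℝ (fun i : S => f' i) ∧ ∃ x, ∀ i ∈ S, f' i x = c' i := by
        intro S hS
        have hT : (S.map (Fin.succEmb n)).card ≤ k + 1 := by rwa [Finset.card_map]
        obtain ⟨h1, x, hx⟩ := hgen _ hT
        constructor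
        · have hinj : Function.Injective
              (fun i : S => (⟨i.1.succ, Finset.mem_map_of_mem _ i.2⟩ :
                (S.map (Fin.succEmb n)))) := by
            intro a b hab
            apply Subtype.ext
            have := congrArg Subtype.val hab
            exact Fin.succ_injective n this
          exact h1.comp _ hinj
        · exact ⟨x, fun i hi => hx i.succ (Finset.mem_map_of_mem _ hi)⟩
      have hempty' : ∀ S : Finset (Fin n), S.card = k + 1 + 1 →
          ¬ ∃ x, ∀ i ∈ S, f' i x = c' i := by
        rintro S hS ⟨x, hx⟩
        apply hempty (S.map (Fin.succEmb n)) (by rwa [Finset.card_map])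
        refine ⟨x, fun j hj => ?_⟩
        obtain ⟨i, hi, rfl⟩ := Finset.mem_map.mp hj
        exact hx i hi
      -- dimension of the restriction
      have hK : Module.finrank ℝ (LinearMap.ker (f 0)) = k := by
        have h1 := LinearMap.finrank_range_add_finrank_ker (f 0)
        have h2 : LinearMap.range (f 0) = ⊤ := by
          rw [LinearMap.range_eq_top]
          intro r
          exact ⟨r • v1, by rw [map_smul, hv1, smul_eq_mul, mul_one]⟩
        rw [h2, finrank_top, Module.finrank_self, hV] at h1
        omega
      have hT0 : ∀ S : Finset (Fin n), (insert 0 (S.map (Fin.succEmb n))).card = S.card + 1 := by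
        intro S
        rw [Finset.card_insert_of_notMem, Finset.card_map]
        intro h
        obtain ⟨i, _, hi⟩ := Finset.mem_map.mp h
        exact Fin.succ_ne_zero i hi
      -- hypotheses for the restricted arrangement
      have hgenK : ∀ S : Finset (Fin n), S.card ≤ k →
          LinearIndependent ℝ (fun i : S => g i) ∧ ∃ v, ∀ i ∈ S, g i v = d i := by
        intro S hS
        have hTc : (insert 0 (S.map (Fin.succEmb n))).card ≤ k + 1 := by
          rw [hT0]; omega
        obtain ⟨hind, xT, hxT⟩ := hgen _ hTc
        constructor
        · rw [Fintype.linearIndependent_iff]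
          intro a ha
          set A : Fin n → ℝ := fun i => if h : i ∈ S then a ⟨i, h⟩ else 0 with hA
          have hgsum : ∑ i : Fin n, A i • g i = 0 := by
            have e1 : ∑ i : Fin n, A i • g i = ∑ i ∈ S, A i • g i := by
              symm
              apply Finset.sum_subset (Finset.subset_univ S)
              intro x _ hxS
              simp [hA, hxS]
            have e2 : ∑ i ∈ S, A i • g i = ∑ i : S, a i • g i := by
              rw [← Finset.sum_coe_sort S (fun i => A i • g i)]
              apply Finset.sum_congr rfl
              intro i _
              congr 1
              rw [hA]
              simp [i.2]
            rw [e1, e2, ha]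
          set h : V →ₗ[ℝ] ℝ := ∑ i : Fin n, A i • f' i with hh
          have hker : ∀ u, (hu : u ∈ LinearMap.ker (f 0)) → h u = 0 := by
            intro u hu
            have e3 : h u = (∑ i : Fin n, A i • g i) ⟨u, hu⟩ := by
              rw [hh]
              simp [hg, LinearMap.sum_apply]
            rw [e3, hgsum]
            rfl
          set μ : ℝ := h v1 with hμ
          have hall : ∀ x : V, h x = μ * f 0 x := by
            intro x
            have hx' : x - f 0 x • v1 ∈ LinearMap.ker (f 0) := by
              rw [LinearMap.mem_ker, map_sub, map_smul, hv1, smul_eq_mul, mul_one, sub_self]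
            calc h x = h ((x - f 0 x • v1) + f 0 x • v1) := by rw [sub_add_cancel]
              _ = h (x - f 0 x • v1) + f 0 x * h v1 := by rw [map_add, map_smul, smul_eq_mul]
              _ = μ * f 0 x := by rw [hker _ hx', zero_add, hμ]; ring
          set b : Fin (n+1) → ℝ := Fin.cons (-μ) A with hb
          have hb0 : ∀ j, j ∉ insert 0 (S.map (Fin.succEmb n)) → b j = 0 := by
            intro j hj
            rw [Finset.mem_insert] at hj
            push_neg at hj
            refine Fin.cases (fun h0 => absurd rfl h0.1) (fun m hm => ?_) j hj
            simp only [hb, Fin.cons_succ, hA]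
            rw [dif_neg]
            intro hmem
            exact hm.2 (Finset.mem_map_of_mem _ hmem)
          have hbsum : ∑ j : Fin (n+1), b j • f j = 0 := by
            rw [Fin.sum_univ_succ]
            have e4 : ∑ m : Fin n, b m.succ • f m.succ = h := by
              rw [hh]
              apply Finset.sum_congr rfl
              intro m _
              rw [hb, Fin.cons_succ]
            rw [e4]
            have hb00 : b 0 = -μ := by rw [hb, Fin.cons_zero]
            rw [hb00]
            ext x
            simp only [LinearMap.add_apply, LinearMap.smul_apply, LinearMap.zero_apply,
              smul_eq_mul]
            rw [hall x]
            ring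
          have hz := indep_coeffs hind b hb0 hbsum
          intro i
          have h1 : b i.1.succ = 0 := hz i.1.succ
          simp only [hb, Fin.cons_succ, hA] at h1
          rw [dif_pos i.2] at h1
          exact h1
        · have hTc' := hTc
          obtain ⟨x, hx⟩ := (hgen _ hTc).2
          have hx0' : f 0 x = c 0 := hx 0 (Finset.mem_insert_self _ _)
          have hker : x - x0 ∈ LinearMap.ker (f 0) := by
            rw [LinearMap.mem_ker, map_sub, hx0', hx0, sub_self]
          refine ⟨⟨x - x0, hker⟩, fun i hi => ?_⟩
          have hgi : g i ⟨x - x0, hker⟩ = f' i x - f' i x0 := by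
            simp [hg, map_sub]
          have hfi : f' i x = c' i :=
            hx i.succ (Finset.mem_insert_of_mem (Finset.mem_map_of_mem _ hi))
          rw [hgi, hfi]
      have hemptyK : ∀ S : Finset (Fin n), S.card = k + 1 →
          ¬ ∃ v, ∀ i ∈ S, g i v = d i := by
        rintro S hS ⟨v, hv⟩
        apply hempty (insert 0 (S.map (Fin.succEmb n))) (by rw [hT0, hS])
        refine ⟨x0 + v.1, fun j hj => ?_⟩
        rcases Finset.mem_insert.mp hj with rfl | hj'
        · have hv0 : f 0 v.1 = 0 := v.2
          rw [map_add, hx0, hv0, add_zero]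
        · obtain ⟨i, hi, rfl⟩ := Finset.mem_map.mp hj'
          have hje : (Fin.succEmb n) i = i.succ := rfl
          rw [hje]
          have h1 := hv i hi
          have h2 : g i v = f i.succ v.1 := rfl
          rw [h2] at h1
          simp only [hd] at h1
          have : f i.succ (x0 + v.1) = f' i x0 + f i.succ v.1 := by
            rw [map_add]
          rw [this, h1]
          show f' i x0 + (c' i - f' i x0) = c i.succ
          simp only [hc']
          ring
      -- put it together
      rw [hsum, ihn f' c' hgen' hempty',
        ih (LinearMap.ker (f 0)) hK n g d hgenK hemptyK]
      rw [Finset.sum_range_succ' (fun i => Nat.choose (n+1) i) (k+1),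
        Finset.sum_range_succ' (fun i => Nat.choose n i) (k+1)]
      simp only [Nat.choose_succ_succ, Nat.choose_zero_right]
      rw [Finset.sum_add_distrib]
      ring


set_option maxHeartbeats 1000000 in
lemma card_components {k n : ℕ} (f : Fin n → (EuclideanSpace ℝ (Fin k) →ₗ[ℝ] ℝ)) (c : Fin n → ℝ) :
    Nat.card (ConnectedComponents
      ({x : EuclideanSpace ℝ (Fin k) | ∀ i, f i x ≠ c i} : Set (EuclideanSpace ℝ (Fin k)))) =
    Nat.card {σ : Fin n → Bool // Realizes f c σ} := by
  classical
  set V := EuclideanSpace ℝ (Fin k) with hVdef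
  set U : Set V := {x | ∀ i, f i x ≠ c i} with hU
  set C : (Fin n → Bool) → Set V := fun σ =>
    ⋂ i, (if σ i then {z | c i < f i z} else {z | f i z < c i}) with hC
  have hfc : ∀ i : Fin n, Continuous (f i) := fun i => (f i).continuous_of_finiteDimensional
  have hCopen : ∀ σ, IsOpen (C σ) := by
    intro σ
    apply isOpen_iInter_of_finite
    intro i
    by_cases h : σ i = true
    · rw [if_pos h]; exact isOpen_lt continuous_const (hfc i)
    · rw [if_neg h]; exact isOpen_lt (hfc i) continuous_const
  have hCconv : ∀ σ, Convex ℝ (C σ) := by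
    intro σ
    apply convex_iInter
    intro i
    by_cases h : σ i = true
    · rw [if_pos h]; exact convex_halfSpace_gt (LinearMap.isLinear (f i)) (c i)
    · rw [if_neg h]; exact convex_halfSpace_lt (LinearMap.isLinear (f i)) (c i)
  have hCU : ∀ σ, C σ ⊆ U := by
    intro σ z hz i
    have hzi := Set.mem_iInter.mp hz i
    by_cases h : σ i = true
    · rw [if_pos h] at hzi
      exact ne_of_gt hzi
    · rw [if_neg h] at hzi
      exact ne_of_lt hzi
  set s : U → (Fin n → Bool) := fun x i => decide (c i < f i x.1) with hs
  have hmem : ∀ (x : U) (σ), s x = σ ↔ x.1 ∈ C σ := by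
    intro x σ
    constructor
    · intro h
      apply Set.mem_iInter.mpr
      intro i
      have hi := congrFun h i
      simp only [hs] at hi
      by_cases hσ : σ i = true
      · rw [if_pos hσ]
        rw [hσ] at hi
        exact of_decide_eq_true hi
      · rw [if_neg hσ]
        have hσf : σ i = false := Bool.not_eq_true _ |>.mp hσ
        rw [hσf] at hi
        have h2 := of_decide_eq_false hi
        exact lt_of_le_of_ne (not_lt.mp h2) (x.2 i)
    · intro h
      funext i
      have hi := Set.mem_iInter.mp h i
      simp only [hs]
      by_cases hσ : σ i = true
      · rw [if_pos hσ] at hi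
        rw [hσ]
        exact decide_eq_true hi
      · rw [if_neg hσ] at hi
        have hσf : σ i = false := Bool.not_eq_true _ |>.mp hσ
        rw [hσf]
        exact decide_eq_false (not_lt.mpr (le_of_lt hi))
  have hloc : IsLocallyConstant s := by
    rw [IsLocallyConstant.iff_isOpen_fiber]
    intro σ
    have hset : s ⁻¹' {σ} = Subtype.val ⁻¹' (C σ) := by
      ext x
      simp only [Set.mem_preimage, Set.mem_singleton_iff]
      exact hmem x σ
    rw [hset]
    exact (hCopen σ).preimage continuous_subtype_val
  have key1 : ∀ x y : U, s x = s y →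
      (ConnectedComponents.mk x = ConnectedComponents.mk y) := by
    intro x y h
    have hx : x.1 ∈ C (s x) := (hmem x (s x)).mp rfl
    have hy : y.1 ∈ C (s x) := (hmem y (s x)).mp h.symm
    have hpre : IsPreconnected (Subtype.val ⁻¹' (C (s x)) : Set U) := by
      apply Topology.IsInducing.subtypeVal.isPreconnected_image.mp
      have himg : Subtype.val '' (Subtype.val ⁻¹' (C (s x)) : Set U) = C (s x) := by
        rw [Set.image_preimage_eq_inter_range, Subtype.range_val]
        exact Set.inter_eq_self_of_subset_left (hCU (s x))
      rw [himg]
      exact (hCconv (s x)).isPreconnected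
    have hyc : y ∈ connectedComponent x :=
      hpre.subset_connectedComponent (Set.mem_preimage.mpr hx) (Set.mem_preimage.mpr hy)
    exact (ConnectedComponents.coe_eq_coe'.mpr hyc).symm
  have key2 : ∀ x y : U, ConnectedComponents.mk x = ConnectedComponents.mk y → s x = s y := by
    intro x y h
    have hy : y ∈ connectedComponent x := ConnectedComponents.coe_eq_coe'.mp h.symm
    exact hloc.apply_eq_of_isPreconnected isPreconnected_connectedComponent
      mem_connectedComponent hy
  have hwit : ∀ σ : Fin n → Bool, Realizes f c σ → ∃ x : U, s x = σ := by
    rintro σ ⟨x, hx⟩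
    have hxC : x ∈ C σ := by
      apply Set.mem_iInter.mpr
      intro i
      have := hx i
      by_cases h : σ i = true
      · rw [if_pos h] at this ⊢; exact this
      · rw [if_neg h] at this ⊢; exact this
    exact ⟨⟨x, hCU σ hxC⟩, (hmem _ σ).mpr hxC⟩
  have hreal : ∀ x : U, Realizes f c (s x) := by
    intro x
    refine ⟨x.1, fun i => ?_⟩
    simp only [hs, decide_eq_true_eq]
    by_cases h : c i < f i x.1
    · rw [if_pos h]; exact h
    · rw [if_neg h]
      exact lt_of_le_of_ne (not_lt.mp h) (x.2 i)
  set F : {σ // Realizes f c σ} → ConnectedComponents U :=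
    fun σ => ConnectedComponents.mk (Classical.choose (hwit σ.1 σ.2)) with hFdef
  have hF : ∀ σ : {σ // Realizes f c σ}, s (Classical.choose (hwit σ.1 σ.2)) = σ.1 :=
    fun σ => Classical.choose_spec (hwit σ.1 σ.2)
  have hbij : Function.Bijective F := by
    constructor
    · intro σ σ' h
      apply Subtype.ext
      rw [← hF σ, ← hF σ']
      exact key2 _ _ h
    · intro comp
      obtain ⟨x, hx⟩ := ConnectedComponents.surjective_coe comp
      refine ⟨⟨s x, hreal x⟩, ?_⟩
      rw [← hx]
      exact key1 _ _ (hF _)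
  exact (Nat.card_eq_of_bijective F hbij).symm


/-- The number of connected components of the complement of an arrangement of `n` hyperplanes
in general position in `ℝ^k` equals `∑_{i=0}^{k} C(n, i)`.  The `i`-th hyperplane is
`{x | f i x = c i}`; general position says that any `j ≤ k` of the affine hyperplanes
intersect in an affine subspace of dimension `k − j` (the corresponding linear functionals
are linearly independent and the affine equations are simultaneously solvable), and no
`k + 1` of them have a common point. -/
theorem stmt_5 (k n : ℕ) (f : Fin n → (EuclideanSpace ℝ (Fin k) →ₗ[ℝ] ℝ)) (c : Fin n → ℝ)
    (hgen : ∀ S : Finset (Fin n), S.card ≤ k →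
      LinearIndependent ℝ (fun i : S => f i) ∧ ∃ x, ∀ i ∈ S, f i x = c i)
    (hempty : ∀ S : Finset (Fin n), S.card = k + 1 → ¬ ∃ x, ∀ i ∈ S, f i x = c i) :
    Nat.card (ConnectedComponents
        ({x : EuclideanSpace ℝ (Fin k) | ∀ i, f i x ≠ c i} : Set (EuclideanSpace ℝ (Fin k)))) =
      ∑ i ∈ Finset.range (k + 1), n.choose i := by
  rw [card_components f c]
  exact count_realizes k (EuclideanSpace ℝ (Fin k)) finrank_euclideanSpace_fin n f c hgen hempty
end

section
/- Fix 1 ≤ j ≤ k and ε > 0. For 0 ≤ m ≤ k(k−j), let ℓ_{mε} ⊂ R^k be the (k−j)-dimensional subspace spanned by the moment-curve vectors v_k(mε), v_k(mε+1), …, v_k(mε+k−j−1), where v_k(x) = (1, x, x^2, …, x^{k-1}). Then for every j-dimensional linear subspace ℓ' of R^k there exists m with 0 ≤ m ≤ k(k−j) such that ℓ' ∩ ℓ_{mε} = {0}. -/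
open Polynomial Matrix

noncomputable def dlt (p : ℝ[X]) : ℝ[X] := p.comp (X + C 1) - p

lemma dlt_coeff_eq (p : ℝ[X]) (i : ℕ) {d : ℕ} (hp : p.natDegree ≤ d) :
    (dlt p).coeff i = (∑ e ∈ Finset.range (d+1), p.coeff e * (e.choose i : ℝ)) - p.coeff i := by
  have hcomp : (p.comp (X + C 1)).coeff i
      = ∑ e ∈ Finset.range (d+1), p.coeff e * (e.choose i : ℝ) := by
    rw [comp_eq_sum_left, coeff_sum]
    have : (X + C (1:ℝ)) = (X + 1 : ℝ[X]) := by norm_num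
    rw [this]
    rw [Polynomial.sum_over_range' p (fun n => by simp) (d+1) (Nat.lt_succ_of_le hp)]
    refine Finset.sum_congr rfl fun e _ => ?_
    rw [coeff_C_mul, coeff_X_add_one_pow]
  rw [dlt, coeff_sub, hcomp]

lemma dlt_coeff_of_le (p : ℝ[X]) {d i : ℕ} (hp : p.natDegree ≤ d) (hi : d ≤ i) :
    (dlt p).coeff i = 0 := by
  rw [dlt_coeff_eq p i hp]
  have hs : (∑ e ∈ Finset.range (d+1), p.coeff e * (e.choose i : ℝ)) = p.coeff i := by
    by_cases hmem : i ∈ Finset.range (d+1)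
    · rw [Finset.sum_eq_single i]
      · simp
      · intro e he hne
        have he' : e < d + 1 := Finset.mem_range.mp he
        have : e < i := lt_of_le_of_ne (le_trans (Nat.lt_succ_iff.mp he') hi) hne
        rw [Nat.choose_eq_zero_of_lt this]; ring
      · intro h; exact (h hmem).elim
    · have hid : d < i := by
        rcases lt_or_eq_of_le hi with h | h
        · exact h
        · exact absurd (Finset.mem_range.mpr (by omega)) hmem
      have hci : p.coeff i = 0 := coeff_eq_zero_of_natDegree_lt (lt_of_le_of_lt hp hid)
      rw [hci, Finset.sum_eq_zero]
      intro e he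
      have : e < i := by have := Finset.mem_range.mp he; omega
      rw [Nat.choose_eq_zero_of_lt this]; ring
  rw [hs, sub_self]

lemma dlt_natDegree_le (p : ℝ[X]) {d : ℕ} (hp : p.natDegree ≤ d) :
    (dlt p).natDegree ≤ d - 1 := by
  rw [natDegree_le_iff_coeff_eq_zero]
  intro N hN
  exact dlt_coeff_of_le p hp (by omega)

lemma dlt_coeff_top (p : ℝ[X]) {d : ℕ} (hp : p.natDegree ≤ d + 1) :
    (dlt p).coeff d = ((d+1 : ℕ) : ℝ) * p.coeff (d+1) := by
  rw [dlt_coeff_eq p d hp]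
  rw [Finset.sum_range_succ]
  have hs : (∑ e ∈ Finset.range (d+1), p.coeff e * (e.choose d : ℝ)) = p.coeff d := by
    rw [Finset.sum_eq_single d]
    · simp
    · intro e he hne
      have : e < d := by have := Finset.mem_range.mp he; omega
      rw [Nat.choose_eq_zero_of_lt this]; ring
    · intro h; exact (h (Finset.mem_range.mpr (by omega))).elim
  rw [hs]
  rw [Nat.choose_succ_self_right]
  ring

lemma dlt_of_natDegree_le_zero (p : ℝ[X]) (hp : p.natDegree ≤ 0) : dlt p = 0 := by
  rw [eq_C_of_natDegree_le_zero hp, dlt, C_comp, sub_self]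

lemma dlt_zero : dlt 0 = 0 := by simp [dlt]

lemma dlt_iter_natDegree_le (p : ℝ[X]) {d : ℕ} (hp : p.natDegree ≤ d) (r : ℕ) :
    (dlt^[r] p).natDegree ≤ d - r := by
  induction r with
  | zero => simpa using hp
  | succ r ih =>
      rw [Function.iterate_succ_apply']
      have := dlt_natDegree_le (dlt^[r] p) ih
      omega

lemma dlt_iter_eq_zero (p : ℝ[X]) {d : ℕ} (hp : p.natDegree ≤ d) {r : ℕ} (hr : d < r) :
    dlt^[r] p = 0 := by
  induction r with
  | zero => omega
  | succ r ih =>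
      rw [Function.iterate_succ_apply']
      rcases Nat.lt_or_ge d r with h | h
      · rw [ih h, dlt_zero]
      · have hrd : r = d := by omega
        subst hrd
        exact dlt_of_natDegree_le_zero _ (by simpa using dlt_iter_natDegree_le p hp r)

lemma dlt_iter_coeff (p : ℝ[X]) {d : ℕ} (hp : p.natDegree ≤ d) (r : ℕ) :
    (dlt^[r] p).coeff (d - r) = (d.descFactorial r : ℝ) * p.coeff d := by
  induction r with
  | zero => simp
  | succ r ih =>
      rw [Function.iterate_succ_apply']
      rcases Nat.lt_or_ge r d with h | h
      · have h1 : d - r = (d - (r+1)) + 1 := by omega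
        have h2 : (dlt^[r] p).natDegree ≤ (d - (r+1)) + 1 := by
          have := dlt_iter_natDegree_le p hp r; omega
        rw [dlt_coeff_top _ h2, ← h1, ih]
        rw [Nat.descFactorial_succ]
        have h3 : ((d - (r+1)) + 1 : ℕ) = d - r := by omega
        rw [Nat.cast_mul]
        ring
      · have hz : dlt^[r+1] p = 0 := dlt_iter_eq_zero p hp (by omega)
        rw [Function.iterate_succ_apply'] at hz
        rw [hz]
        have hdf : d.descFactorial (r+1) = 0 := by
          rw [Nat.descFactorial_eq_zero_iff_lt]; omega
        simp [hz, hdf]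
        exact Or.inl (Or.inl (by omega))

lemma newton (p : ℝ[X]) (r : ℕ) :
    p.comp (X + C (r : ℝ)) = ∑ i ∈ Finset.range (r+1), (r.choose i : ℝ) • dlt^[i] p := by
  induction r generalizing p with
  | zero => simp
  | succ r ih =>
      have hXC : (X + C ((r:ℝ) + 1)) = (X + C (1:ℝ)).comp (X + C (r:ℝ)) := by
        rw [add_comp, X_comp, C_comp, C_add, C_1]; ring
      have hstep : p.comp (X + C ((r:ℝ)+1)) = (dlt p).comp (X + C (r:ℝ)) + p.comp (X + C (r:ℝ)) := by
        rw [hXC, ← comp_assoc, dlt, sub_comp]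
        ring
      have hcast : ((r+1 : ℕ) : ℝ) = (r : ℝ) + 1 := by push_cast; ring
      rw [hcast, hstep, ih (dlt p), ih p]
      have hiter : ∀ i, dlt^[i] (dlt p) = dlt^[i+1] p := fun i => (Function.iterate_succ_apply dlt i p).symm
      -- RHS: sum over range (r+2)
      rw [Finset.sum_range_succ' (fun i => ((r+1).choose i : ℝ) • dlt^[i] p) (r+1)]
      simp only [Nat.choose_zero_right, Nat.cast_one, one_smul, Function.iterate_zero_apply]
      have hsplit : ∀ i, (((r+1).choose (i+1) : ℕ) : ℝ) • dlt^[i+1] p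
          = (r.choose i : ℝ) • dlt^[i] (dlt p) + (r.choose (i+1) : ℝ) • dlt^[i+1] p := by
        intro i
        rw [hiter, Nat.choose_succ_succ]
        push_cast
        rw [add_smul]
      rw [Finset.sum_congr rfl fun i _ => hsplit i]
      rw [Finset.sum_add_distrib]
      have h2 : (∑ i ∈ Finset.range (r+1), (r.choose (i+1) : ℝ) • dlt^[i+1] p) + p
          = ∑ i ∈ Finset.range (r+1), (r.choose i : ℝ) • dlt^[i] p := by
        have := Finset.sum_range_succ' (fun i => (r.choose i : ℝ) • dlt^[i] p) r
        rw [this]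
        have hlast : (r.choose (r+1) : ℝ) • dlt^[r+1] p = 0 := by
          rw [Nat.choose_succ_self]; simp
        rw [Finset.sum_range_succ (fun i => (r.choose (i+1) : ℝ) • dlt^[i+1] p) r, hlast]
        simp
      rw [add_assoc, h2]

lemma newton_fin {n : ℕ} (p : ℝ[X]) (r : Fin n) :
    p.comp (X + C ((r : ℕ) : ℝ)) = ∑ i : Fin n, ((r:ℕ).choose (i:ℕ) : ℝ) • dlt^[(i:ℕ)] p := by
  rw [newton p r]
  rw [Fin.sum_univ_eq_sum_range (fun i => ((r:ℕ).choose i : ℝ) • dlt^[i] p) n]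
  apply Finset.sum_subset
  · intro x hx
    simp only [Finset.mem_range] at *
    have := r.isLt; omega
  · intro x _ hx
    simp only [Finset.mem_range, not_lt] at hx
    rw [Nat.choose_eq_zero_of_lt (by omega)]
    simp

lemma cas_det_eq {n : ℕ} (f : Fin n → ℝ[X]) :
    (Matrix.of fun s r : Fin n => (f s).comp (X + C ((r:ℕ) : ℝ))).det
      = (Matrix.of fun s i : Fin n => dlt^[(i:ℕ)] (f s)).det := by
  have hmul : (Matrix.of fun s r : Fin n => (f s).comp (X + C ((r:ℕ) : ℝ)))
      = (Matrix.of fun s i : Fin n => dlt^[(i:ℕ)] (f s))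
        * (Matrix.of fun i r : Fin n => (C (((r:ℕ).choose (i:ℕ) : ℝ)) : ℝ[X])) := by
    refine Matrix.ext fun s r => ?_
    simp only [Matrix.of_apply, Matrix.mul_apply]
    rw [newton_fin (f s) r]
    refine Finset.sum_congr rfl ?_
    intro i hi
    rw [smul_eq_C_mul, mul_comm]
  rw [hmul, Matrix.det_mul]
  have htri : (Matrix.of fun i r : Fin n => (C (((r:ℕ).choose (i:ℕ) : ℝ)) : ℝ[X])).BlockTriangular id := by
    intro i r h
    simp only [Matrix.of_apply]
    rw [Nat.choose_eq_zero_of_lt (by exact_mod_cast h)]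
    simp
  rw [Matrix.det_of_upperTriangular htri]
  simp

lemma coeff_prod_nd {ι : Type*} [DecidableEq ι] (s : Finset ι) (f : ι → ℝ[X]) (e : ι → ℕ)
    (h : ∀ i ∈ s, (f i).natDegree ≤ e i) :
    (∏ i ∈ s, f i).coeff (∑ i ∈ s, e i) = ∏ i ∈ s, (f i).coeff (e i) := by
  induction s using Finset.induction_on with
  | empty => simp
  | insert a s hni ih =>
      rw [Finset.prod_insert hni, Finset.sum_insert hni, Finset.prod_insert hni]
      rw [coeff_mul_add_eq_of_natDegree_le (h a (Finset.mem_insert_self a s))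
        (le_trans (natDegree_prod_le s f) (Finset.sum_le_sum fun i hi => h i (Finset.mem_insert_of_mem hi)))]
      rw [ih fun i hi => h i (Finset.mem_insert_of_mem hi)]

lemma cast_descFactorial_real (a b : ℕ) :
    ((a.descFactorial b : ℕ) : ℝ) = ∏ t ∈ Finset.range b, ((a : ℝ) - t) := by
  induction b with
  | zero => simp
  | succ b ih =>
      rw [Nat.descFactorial_succ, Finset.prod_range_succ, Nat.cast_mul, ih]
      rcases le_or_gt b a with h | h
      · rw [Nat.cast_sub h]; ring
      · have ha : a ∈ Finset.range b := Finset.mem_range.mpr h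
        have hz : (∏ t ∈ Finset.range b, ((a : ℝ) - t)) = 0 :=
          Finset.prod_eq_zero ha (by simp)
        rw [hz, Nat.sub_eq_zero_of_le (le_of_lt h)]
        simp

lemma det_dm_ne_zero {n : ℕ} (f : Fin n → ℝ[X]) (hf0 : ∀ s, f s ≠ 0)
    (hinj : Function.Injective fun s => (f s).natDegree) :
    (Matrix.of fun s i : Fin n => dlt^[(i:ℕ)] (f s)).det ≠ 0 := by
  classical
  set d : Fin n → ℕ := fun s => (f s).natDegree with hd
  set T : ℕ := (∑ s, d s) - (∑ i : Fin n, (i:ℕ)) with hT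
  have key : ((Matrix.of fun s i : Fin n => dlt^[(i:ℕ)] (f s)).det).coeff T
      = (Matrix.of fun s i : Fin n => (((d s).descFactorial (i:ℕ) : ℕ) : ℝ)).det
        * ∏ s, (f s).leadingCoeff := by
    rw [Matrix.det_apply', Matrix.det_apply', finset_sum_coeff, Finset.sum_mul]
    refine Finset.sum_congr rfl ?_
    intro σ _
    simp only [Matrix.of_apply]
    have hC : ((Equiv.Perm.sign σ : ℤ) : ℝ[X]) = C ((Equiv.Perm.sign σ : ℤ) : ℝ) := by
      push_cast; simp
    rw [hC, coeff_C_mul]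
    rw [mul_assoc]
    congr 1
    by_cases hgood : ∀ i : Fin n, (i : ℕ) ≤ d (σ i)
    · have hsum : T = ∑ i : Fin n, (d (σ i) - (i:ℕ)) := by
        rw [Finset.sum_tsub_distrib Finset.univ fun i _ => hgood i]
        rw [Equiv.sum_comp σ d]
      rw [hsum]
      rw [coeff_prod_nd Finset.univ _ (fun i : Fin n => d (σ i) - (i:ℕ))
        (fun i _ => dlt_iter_natDegree_le (f (σ i)) (le_refl _) (i:ℕ))]
      have : ∀ i : Fin n, (dlt^[(i:ℕ)] (f (σ i))).coeff (d (σ i) - (i:ℕ))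
          = (((d (σ i)).descFactorial (i:ℕ) : ℕ) : ℝ) * (f (σ i)).leadingCoeff := by
        intro i
        rw [dlt_iter_coeff (f (σ i)) (le_refl _) (i:ℕ)]
        rfl
      rw [Finset.prod_congr rfl fun i _ => this i]
      rw [Finset.prod_mul_distrib]
      congr 1
      exact Equiv.prod_comp σ fun s => (f s).leadingCoeff
    · push_neg at hgood
      obtain ⟨i0, hi0⟩ := hgood
      have hz1 : dlt^[(i0:ℕ)] (f (σ i0)) = 0 :=
        dlt_iter_eq_zero (f (σ i0)) (le_refl _) hi0
      have hz2 : (((d (σ i0)).descFactorial (i0:ℕ) : ℕ) : ℝ) = 0 := by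
        rw [Nat.cast_eq_zero, Nat.descFactorial_eq_zero_iff_lt]
        exact hi0
      rw [Finset.prod_eq_zero (Finset.mem_univ i0) hz1,
          Finset.prod_eq_zero (Finset.mem_univ i0) hz2]
      simp
  have hvdm : (Matrix.of fun s i : Fin n => (((d s).descFactorial (i:ℕ) : ℕ) : ℝ)).det ≠ 0 := by
    have heq : (Matrix.of fun s i : Fin n => (((d s).descFactorial (i:ℕ) : ℕ) : ℝ))
        = Matrix.of fun s i : Fin n =>
            ((∏ t ∈ Finset.range (i:ℕ), ((X : ℝ[X]) - C (t:ℝ))).eval ((d s : ℕ) : ℝ)) := by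
      refine Matrix.ext fun s i => ?_
      simp only [Matrix.of_apply]
      rw [cast_descFactorial_real, eval_prod]
      refine Finset.prod_congr rfl ?_
      intro t _
      simp
    rw [heq]
    rw [← Matrix.det_eval_matrixOfPolynomials_eq_det_vandermonde (fun s => ((d s : ℕ) : ℝ))
      (fun i => ∏ t ∈ Finset.range (i:ℕ), ((X : ℝ[X]) - C (t:ℝ)))
      (fun i => by
        show (∏ t ∈ Finset.range (i:ℕ), ((X:ℝ[X]) - C (t:ℝ))).natDegree = (i:ℕ)
        rw [natDegree_prod (s := Finset.range (i:ℕ)) (f := fun t : ℕ => (X:ℝ[X]) - C (t:ℝ)) (fun t _ => X_sub_C_ne_zero (t:ℝ))]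
        simp only [natDegree_X_sub_C, Finset.sum_const, Finset.card_range, smul_eq_mul, mul_one])
      (fun i => monic_prod_of_monic _ _ fun t _ => monic_X_sub_C (t:ℝ))]
    rw [Matrix.det_vandermonde_ne_zero_iff]
    intro s s' hss
    exact hinj (Nat.cast_injective hss)
  have hlc : (∏ s, (f s).leadingCoeff) ≠ 0 :=
    Finset.prod_ne_zero_iff.mpr fun s _ => leadingCoeff_ne_zero.mpr (hf0 s)
  intro hdet0
  rw [hdet0] at key
  simp only [coeff_zero] at key
  exact (mul_ne_zero hvdm hlc) key.symm

lemma comb_zero {n : ℕ} (f : Fin n → ℝ[X]) (h0 : ∀ s, f s ≠ 0)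
    (hinj : Function.Injective fun s => (f s).natDegree) (c : Fin n → ℝ)
    (hc : ∑ s, c s • f s = 0) : ∀ s, c s = 0 := by
  classical
  by_contra hex
  push_neg at hex
  obtain ⟨s0, hs0⟩ := hex
  set S : Finset (Fin n) := Finset.univ.filter (fun s => c s ≠ 0) with hS
  have hSne : S.Nonempty := ⟨s0, by simp [hS, hs0]⟩
  obtain ⟨sm, hsmS, hmax⟩ := Finset.exists_max_image S (fun s => (f s).natDegree) hSne
  have hcsm : c sm ≠ 0 := (Finset.mem_filter.mp hsmS).2
  have h0' : ((∑ s, c s • f s)).coeff ((f sm).natDegree) = 0 := by rw [hc]; simp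
  rw [finset_sum_coeff] at h0'
  have hsingle : ∀ b : Fin n, b ∈ Finset.univ → b ≠ sm →
      (c b • f b).coeff ((f sm).natDegree) = 0 := by
    intro b _ hb
    by_cases hcb : c b = 0
    · simp [hcb]
    · have hbS : b ∈ S := by simp [hS, hcb]
      have hlt : (f b).natDegree < (f sm).natDegree := by
        have hle := hmax b hbS
        rcases lt_or_eq_of_le hle with h | h
        · exact h
        · exact absurd (hinj h) hb
      rw [coeff_smul, coeff_eq_zero_of_natDegree_lt hlt, smul_zero]
  rw [Finset.sum_eq_single sm hsingle (fun h => absurd (Finset.mem_univ sm) h)] at h0'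
  rw [coeff_smul, smul_eq_mul] at h0'
  exact hcsm (by
    have hlc : (f sm).coeff ((f sm).natDegree) ≠ 0 := by
      rw [← leadingCoeff]
      exact leadingCoeff_ne_zero.mpr (h0 sm)
    exact (mul_eq_zero.mp h0').resolve_right hlc)

lemma exists_distinct_degrees : ∀ (n : ℕ) (V : Submodule ℝ ℝ[X]), FiniteDimensional ℝ V →
    Module.finrank ℝ V = n →
    ∃ f : Fin n → ℝ[X], (∀ s, f s ∈ V) ∧ (∀ s, f s ≠ 0) ∧
      Function.Injective fun s => (f s).natDegree := by
  intro n
  induction n with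
  | zero =>
      intro V _ _
      exact ⟨Fin.elim0, fun s => s.elim0, fun s => s.elim0, fun s => s.elim0⟩
  | succ n ih =>
      intro V hFD hrk
      have b : Module.Basis (Fin (n+1)) ℝ V := (Module.finBasis ℝ V).reindex (finCongr hrk)
      set D : ℕ := Finset.univ.sup (fun i : Fin (n+1) => ((b i : ℝ[X])).natDegree) with hD
      have hboundV : ∀ v : V, ((v : ℝ[X])).natDegree ≤ D := by
        intro v
        have hrepr : (v : ℝ[X]) = ∑ i, (b.repr v i) • ((b i : ℝ[X])) := by
          conv_lhs => rw [← b.sum_repr v]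
          push_cast
          rfl
        rw [hrepr]
        refine natDegree_sum_le_of_forall_le _ _ ?_
        intro i _
        refine le_trans (natDegree_smul_le _ _) ?_
        exact Finset.le_sup (f := fun i : Fin (n+1) => ((b i : ℝ[X])).natDegree) (Finset.mem_univ i)
      obtain ⟨i0, _, hi0⟩ := Finset.exists_mem_eq_sup Finset.univ
        (Finset.univ_nonempty) (fun i : Fin (n+1) => ((b i : ℝ[X])).natDegree)
      set g : ℝ[X] := (b i0 : ℝ[X]) with hg
      have hgV : g ∈ V := (b i0).2
      have hgne : g ≠ 0 := by
        have := b.ne_zero i0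
        intro habs
        apply this
        exact Subtype.ext habs
      have hgdeg : g.natDegree = D := hi0.symm
      have hglc : g.coeff D ≠ 0 := by
        rw [← hgdeg, ← leadingCoeff]
        exact leadingCoeff_ne_zero.mpr hgne
      set lam : V →ₗ[ℝ] ℝ := (Polynomial.lcoeff ℝ D).comp V.subtype with hlam
      have hsurj : Function.Surjective lam := by
        intro x
        refine ⟨(x / g.coeff D) • ⟨g, hgV⟩, ?_⟩
        simp only [hlam, LinearMap.comp_apply, _root_.map_smul]
        simp only [Submodule.coe_subtype, lcoeff_apply]
        rw [smul_eq_mul]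
        field_simp
      have hker : Module.finrank ℝ (LinearMap.ker lam) = n := by
        have h2 := LinearMap.finrank_range_add_finrank_ker lam
        rw [LinearMap.range_eq_top.mpr hsurj, finrank_top, hrk] at h2
        simp only [Module.finrank_self] at h2
        omega
      set K : Submodule ℝ ℝ[X] := Submodule.map V.subtype (LinearMap.ker lam) with hK
      have hKle : K ≤ V := Submodule.map_subtype_le V _
      have hKFD : FiniteDimensional ℝ K := Submodule.finiteDimensional_of_le hKle
      have hKrk : Module.finrank ℝ K = n := by
        rw [← hker]
        exact (LinearEquiv.finrank_eq
          (Submodule.equivMapOfInjective V.subtype (Submodule.injective_subtype V)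
            (LinearMap.ker lam))).symm
      obtain ⟨f', hf'mem, hf'ne, hf'inj⟩ := ih K hKFD hKrk
      have hf'coeff : ∀ s, (f' s).coeff D = 0 := by
        intro s
        obtain ⟨y, hy, hyeq⟩ := Submodule.mem_map.mp (hf'mem s)
        have h3 : lam y = 0 := hy
        simp only [hlam, LinearMap.comp_apply, Submodule.coe_subtype, lcoeff_apply] at h3
        rw [← hyeq]; exact h3
      have hf'deg : ∀ s, (f' s).natDegree ≠ D := by
        intro s habs
        apply hf'ne s
        have h4 : (f' s).leadingCoeff = 0 := by rw [leadingCoeff, habs]; exact hf'coeff s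
        exact leadingCoeff_eq_zero.mp h4
      refine ⟨Fin.cons g f', ?_, ?_, ?_⟩
      · intro s
        refine Fin.cases ?_ ?_ s
        · simpa using hgV
        · intro s'; simpa using hKle (hf'mem s')
      · intro s
        refine Fin.cases ?_ ?_ s
        · simpa using hgne
        · intro s'; simpa using hf'ne s'
      · intro a b' hab
        rcases Fin.eq_zero_or_eq_succ a with rfl | ⟨a'', rfl⟩ <;>
          rcases Fin.eq_zero_or_eq_succ b' with rfl | ⟨b'', rfl⟩
        · rfl
        · simp only [Fin.cons_zero, Fin.cons_succ] at hab
          exact ((hf'deg b'') ((hab ▸ hgdeg) : (f' b'').natDegree = D)).elim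
        · simp only [Fin.cons_zero, Fin.cons_succ] at hab
          exact ((hf'deg a'') ((hab.symm ▸ hgdeg) : (f' a'').natDegree = D)).elim
        · simp only [Fin.cons_succ] at hab
          exact congrArg Fin.succ (hf'inj hab)

lemma natDegree_det_le {n : ℕ} (M : Matrix (Fin n) (Fin n) ℝ[X]) (b : ℕ)
    (h : ∀ s r, (M s r).natDegree ≤ b) : M.det.natDegree ≤ n * b := by
  rw [Matrix.det_apply']
  refine natDegree_sum_le_of_forall_le _ _ ?_
  intro σ _
  have hC : ((Equiv.Perm.sign σ : ℤ) : ℝ[X]) = C ((Equiv.Perm.sign σ : ℤ) : ℝ) := by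
    push_cast; simp
  rw [hC]
  refine le_trans (natDegree_C_mul_le _ _) ?_
  refine le_trans (natDegree_prod_le _ _) ?_
  calc ∑ i, (M (σ i) i).natDegree ≤ ∑ _i : Fin n, b :=
        Finset.sum_le_sum fun i _ => h (σ i) i
    _ = n * b := by simp [Finset.sum_const, mul_comm]

/-- For `1 ≤ j ≤ k` and `ε > 0`, the `k(k−j)+1` subspaces
`ℓ_{mε} = span{v_k(mε), v_k(mε+1), …, v_k(mε+k−j−1)}`, where `v_k(x) = (1, x, …, x^{k-1})`
is the moment curve, form a family transversal to every `j`-dimensional subspace of `ℝ^k`: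
for every `j`-dimensional linear subspace `ℓ'` there exists `m ≤ k(k−j)` with
`ℓ' ∩ ℓ_{mε} = 0`. -/
theorem stmt_7 (k j : ℕ) (hj1 : 1 ≤ j) (hjk : j ≤ k) (ε : ℝ) (hε : 0 < ε)
    (ℓ' : Submodule ℝ (Fin k → ℝ)) (hℓ' : Module.finrank ℝ ℓ' = j) :
    ∃ m ≤ k * (k - j),
      ℓ' ⊓ Submodule.span ℝ
          (Set.range (fun r : Fin (k - j) => fun i : Fin k => ((m : ℝ) * ε + r) ^ (i : ℕ))) = ⊥ := by
  classical
  rcases eq_or_lt_of_le hjk with rfl | hlt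
  · refine ⟨0, Nat.zero_le _, ?_⟩
    have hempty : IsEmpty (Fin (j - j)) := by
      rw [Nat.sub_self]; infer_instance
    rw [Set.range_eq_empty, Submodule.span_empty, inf_bot_eq]
  -- main case
  set n : ℕ := k - j with hn
  have hn1 : 1 ≤ n := by omega
  -- quotient map
  have hqrk : Module.finrank ℝ ((Fin k → ℝ) ⧸ ℓ') = n := by
    have h1 := Submodule.finrank_quotient_add_finrank ℓ'
    rw [hℓ'] at h1
    have h2 : Module.finrank ℝ (Fin k → ℝ) = k := by
      rw [Module.finrank_fintype_fun_eq_card, Fintype.card_fin]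
    omega
  have e : ((Fin k → ℝ) ⧸ ℓ') ≃ₗ[ℝ] (Fin n → ℝ) :=
    LinearEquiv.ofFinrankEq _ _ (by
      rw [hqrk, Module.finrank_fintype_fun_eq_card, Fintype.card_fin])
  set A : (Fin k → ℝ) →ₗ[ℝ] (Fin n → ℝ) := e.toLinearMap ∘ₗ ℓ'.mkQ with hA
  have hker : ∀ w, A w = 0 ↔ w ∈ ℓ' := by
    intro w
    rw [hA, LinearMap.comp_apply]
    constructor
    · intro h
      have : ℓ'.mkQ w = 0 := by
        apply e.injective
        simpa using h
      rwa [← Submodule.Quotient.mk_eq_zero, ← Submodule.mkQ_apply]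
    · intro h
      have : ℓ'.mkQ w = 0 := by
        rw [Submodule.mkQ_apply, Submodule.Quotient.mk_eq_zero]
        exact h
      rw [this, map_zero]
  have hAsurj : Function.Surjective A := by
    rw [hA]
    exact e.surjective.comp (Submodule.mkQ_surjective ℓ')
  -- std basis vectors
  set E : Fin k → (Fin k → ℝ) := fun i j' => if i = j' then 1 else 0 with hE
  have hdecomp : ∀ w : Fin k → ℝ, A w = ∑ i, w i • A (E i) := by
    intro w
    conv_lhs => rw [pi_eq_sum_univ w, map_sum]
    refine Finset.sum_congr rfl fun i _ => ?_
    exact A.map_smul (w i) (E i)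
  -- the polynomials
  set p : Fin n → ℝ[X] := fun s => ∑ i : Fin k, C (A (E i) s) * X ^ (i:ℕ) with hp
  have hpdeg : ∀ s, (p s).natDegree ≤ k - 1 := by
    intro s
    refine natDegree_sum_le_of_forall_le _ _ ?_
    intro i _
    refine le_trans (natDegree_C_mul_le _ _) ?_
    rw [natDegree_X_pow]
    omega
  have hpcoeff : ∀ s (i' : Fin k), (p s).coeff (i' : ℕ) = A (E i') s := by
    intro s i'
    rw [hp, finset_sum_coeff]
    rw [Finset.sum_eq_single i']
    · rw [coeff_C_mul, coeff_X_pow, if_pos rfl, mul_one]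
    · intro i _ hne
      rw [coeff_C_mul, coeff_X_pow, if_neg (fun hh => hne (Fin.ext hh.symm)), mul_zero]
    · intro h; exact (h (Finset.mem_univ i')).elim
  have heval : ∀ s (x : ℝ), (p s).eval x = A (fun i : Fin k => x ^ (i:ℕ)) s := by
    intro s x
    rw [hp, eval_finset_sum]
    have h1 : A (fun i : Fin k => x ^ (i:ℕ)) = ∑ i : Fin k, x ^ ((i:ℕ)) • A (E i) :=
      hdecomp (fun i : Fin k => x ^ (i:ℕ))
    rw [h1, Finset.sum_apply]
    refine Finset.sum_congr rfl fun i _ => ?_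
    rw [eval_mul, eval_C, eval_pow, eval_X, Pi.smul_apply, smul_eq_mul]
    ring
  -- independence of p
  have hpind : LinearIndependent ℝ p := by
    rw [Fintype.linearIndependent_iff]
    intro c hc
    have hcoe : ∀ i : Fin k, (∑ s, c s * A (E i) s) = 0 := by
      intro i
      have h2 : ((∑ s, c s • p s)).coeff (i:ℕ) = 0 := by rw [hc]; simp
      rw [finset_sum_coeff] at h2
      rw [← h2]
      refine Finset.sum_congr rfl fun s _ => ?_
      rw [coeff_smul, hpcoeff s i, smul_eq_mul]
    obtain ⟨u, hu⟩ := hAsurj c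
    have hzero : (∑ s, c s * c s) = 0 := by
      have h3 : ∀ s, c s = A u s := fun s => by rw [hu]
      calc (∑ s, c s * c s) = ∑ s, c s * A u s := by
            refine Finset.sum_congr rfl fun s _ => by rw [← h3 s]
        _ = ∑ s, c s * (∑ i, u i * A (E i) s) := by
            refine Finset.sum_congr rfl fun s _ => ?_
            congr 1
            rw [hdecomp u, Finset.sum_apply]
            refine Finset.sum_congr rfl fun i _ => by simp
        _ = ∑ s, ∑ i, c s * (u i * A (E i) s) := by
            refine Finset.sum_congr rfl fun s _ => Finset.mul_sum _ _ _
        _ = ∑ i, ∑ s, c s * (u i * A (E i) s) := Finset.sum_comm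
        _ = ∑ i, u i * (∑ s, c s * A (E i) s) := by
            refine Finset.sum_congr rfl fun i _ => ?_
            rw [Finset.mul_sum]
            refine Finset.sum_congr rfl fun s _ => by ring
        _ = 0 := by
            refine Finset.sum_eq_zero fun i _ => ?_
            rw [hcoe i, mul_zero]
    intro s
    have h4 : ∀ s ∈ Finset.univ, 0 ≤ c s * c s := fun s _ => mul_self_nonneg _
    have := (Finset.sum_eq_zero_iff_of_nonneg h4).mp hzero s (Finset.mem_univ s)
    exact mul_self_eq_zero.mp this
  -- the span and a distinct-degree family
  set V : Submodule ℝ ℝ[X] := Submodule.span ℝ (Set.range p) with hV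
  have hVfd : FiniteDimensional ℝ V := FiniteDimensional.span_of_finite ℝ (Set.finite_range p)
  have hVrk : Module.finrank ℝ V = n := by
    rw [hV, finrank_span_eq_card hpind]
    simp
  obtain ⟨f, hfmem, hfne, hfinj⟩ := exists_distinct_degrees n V hVfd hVrk
  have hfmem' : ∀ s, ∃ c : Fin n → ℝ, (∑ t, c t • p t) = f s := by
    intro s
    have hms := hfmem s
    rw [hV] at hms
    exact (Submodule.mem_span_range_iff_exists_fun ℝ).mp hms

  choose B hB using hfmem'
  have hdetB : (Matrix.of B).det ≠ 0 := by
    intro h0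
    obtain ⟨c, hc0, hcB⟩ := (Matrix.exists_vecMul_eq_zero_iff).mpr h0
    have hzero : ∑ s, c s • f s = 0 := by
      calc ∑ s, c s • f s = ∑ s, c s • (∑ t, B s t • p t) := by
            refine Finset.sum_congr rfl fun s _ => by rw [hB s]
        _ = ∑ s, ∑ t, (c s * B s t) • p t := by
            refine Finset.sum_congr rfl fun s _ => ?_
            rw [Finset.smul_sum]
            refine Finset.sum_congr rfl fun t _ => by rw [smul_smul]
        _ = ∑ t, ∑ s, (c s * B s t) • p t := Finset.sum_comm
        _ = ∑ t, (∑ s, c s * B s t) • p t := by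
            refine Finset.sum_congr rfl fun t _ => ?_
            rw [← Finset.sum_smul]
        _ = 0 := by
            refine Finset.sum_eq_zero fun t _ => ?_
            have hv : (Matrix.vecMul c (Matrix.of B)) t = ∑ s, c s * B s t := rfl
            have hv0 : (Matrix.vecMul c (Matrix.of B)) t = 0 := by rw [hcB]; rfl
            rw [← hv, hv0, zero_smul]
    exact hc0 (funext fun s => comb_zero f hfne hfinj c hzero s)
  set Cp : Matrix (Fin n) (Fin n) ℝ[X] :=
    Matrix.of (fun s r : Fin n => (p s).comp (X + C ((r:ℕ) : ℝ))) with hCp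
  set Cf : Matrix (Fin n) (Fin n) ℝ[X] :=
    Matrix.of (fun s r : Fin n => (f s).comp (X + C ((r:ℕ) : ℝ))) with hCfdef
  have hfact : Cf = ((C : ℝ →+* ℝ[X]).mapMatrix (Matrix.of B)) * Cp := by
    refine Matrix.ext fun s r => ?_
    rw [Matrix.mul_apply]
    simp only [RingHom.mapMatrix_apply, Matrix.map_apply, Matrix.of_apply, hCp, hCfdef]
    rw [← hB s, Polynomial.sum_comp]
    refine Finset.sum_congr rfl fun t _ => ?_
    rw [Polynomial.smul_comp, smul_eq_C_mul]
  have hCfdet : Cf.det ≠ 0 := by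
    rw [hCfdef, cas_det_eq f]
    exact det_dm_ne_zero f hfne hfinj
  have hCpdet : Cp.det ≠ 0 := by
    intro h0
    apply hCfdet
    rw [hfact, Matrix.det_mul, h0, mul_zero]
  have hCpdeg : Cp.det.natDegree ≤ n * (k-1) := by
    refine natDegree_det_le Cp (k-1) ?_
    intro s r
    rw [hCp]
    simp only [Matrix.of_apply]
    rw [natDegree_comp, natDegree_X_add_C, mul_one]
    exact hpdeg s
  have hgood : ∃ m : Fin (k * (k - j) + 1), Cp.det.eval (((m:ℕ):ℝ) * ε) ≠ 0 := by
    by_contra hbad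
    push_neg at hbad
    have hdeg_lt : Cp.det.natDegree < Fintype.card (Fin (k * (k-j) + 1)) := by
      rw [Fintype.card_fin]
      have hle : n * (k-1) ≤ k * (k-j) := by
        calc n * (k-1) = (k-j)*(k-1) := by rw [hn]
          _ ≤ (k-j) * k := Nat.mul_le_mul_left _ (by omega)
          _ = k * (k-j) := Nat.mul_comm _ _
      omega
    have hinj2 : Function.Injective (fun m : Fin (k*(k-j)+1) => ((m:ℕ):ℝ) * ε) := by
      intro a b hab
      simp only at hab
      have h11 := mul_right_cancel₀ (ne_of_gt hε) hab
      exact Fin.ext (Nat.cast_injective h11)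
    exact hCpdet (Polynomial.eq_zero_of_natDegree_lt_card_of_eval_eq_zero Cp.det hinj2 hbad hdeg_lt)
  obtain ⟨m, hm⟩ := hgood
  have hmle : (m:ℕ) ≤ k * (k - j) := by
    have h12 : (m:ℕ) < k * (k-j) + 1 := m.isLt
    omega
  refine ⟨(m:ℕ), hmle, ?_⟩
  rw [Submodule.eq_bot_iff]
  intro w hw
  obtain ⟨hw1, hw2⟩ := Submodule.mem_inf.mp hw
  obtain ⟨c, hc⟩ := (Submodule.mem_span_range_iff_exists_fun ℝ).mp hw2
  set x0 : ℝ := ((m:ℕ):ℝ) * ε with hx0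
  set Q : Matrix (Fin n) (Fin n) ℝ :=
    Matrix.of (fun s r : Fin n => (p s).eval (x0 + ((r:ℕ):ℝ))) with hQ
  have hdetQ : Q.det ≠ 0 := by
    have hQmap : Q = (Polynomial.evalRingHom x0).mapMatrix Cp := by
      refine Matrix.ext fun s r => ?_
      simp only [RingHom.mapMatrix_apply, Matrix.map_apply, hCp, Matrix.of_apply,
        coe_evalRingHom, hQ]
      rw [eval_comp]
      simp
    intro h0
    apply hm
    have hmd := RingHom.map_det (Polynomial.evalRingHom x0) Cp
    rw [← hQmap] at hmd
    simp only [coe_evalRingHom] at hmd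
    rw [hmd]
    exact h0
  have hAw : A w = 0 := (hker w).mpr hw1
  have hQc : Q.mulVec c = 0 := by
    funext s
    have h5 : A w s = 0 := by rw [hAw]; rfl
    rw [← hc, map_sum] at h5
    rw [Finset.sum_apply] at h5
    simp only [_root_.map_smul, Pi.smul_apply, smul_eq_mul] at h5
    simp only [← heval] at h5
    show (∑ r : Fin n, (p s).eval (x0 + ((r:ℕ):ℝ)) * c r) = 0
    rw [← h5]
    refine Finset.sum_congr rfl fun r _ => ?_
    rw [mul_comm]
  have hc0 : c = 0 := Matrix.eq_zero_of_mulVec_eq_zero hdetQ hQc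
  rw [← hc]
  rw [hc0]
  simp
end

section
/- Let 1 ≤ j ≤ k and for a (k−j)-dimensional linear subspace ℓ of R^k let Ω(ℓ) = { ℓ' ∈ Gr(k, j) : ℓ ∩ ℓ' ≠ {0} }. Then for any nonempty open subset U of the Grassmannian Gr(k, k−j), the intersection ⋂_{ℓ ∈ U} Ω(ℓ) is empty; i.e., for every j-dimensional subspace ℓ' there exists ℓ ∈ U with ℓ ∩ ℓ' = {0}. -/
open Polynomial Matrix Submodule Set


/-- For any nonempty open set `U` of `(k−j)`-tuples of vectors of `ℝ^k` (parametrizing, via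
spans of linearly independent tuples, the nonempty open subsets of the Grassmannian
`Gr(k, k−j)`), and any `j`-dimensional subspace `ℓ'` of `ℝ^k`, there is a tuple `b ∈ U`
which is linearly independent and whose span meets `ℓ'` trivially; i.e.
`⋂_{ℓ ∈ U} Ω(ℓ) = ∅` where `Ω(ℓ) = {ℓ' ∈ Gr(k,j) : ℓ ∩ ℓ' ≠ 0}`. -/
theorem stmt_8 (k j : ℕ) (hj1 : 1 ≤ j) (hjk : j ≤ k)
    (U : Set (Fin (k - j) → (Fin k → ℝ))) (hU : IsOpen U) (hne : U.Nonempty)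
    (ℓ' : Submodule ℝ (Fin k → ℝ)) (hℓ' : Module.finrank ℝ ℓ' = j) :
    ∃ b ∈ U, LinearIndependent ℝ b ∧
      Submodule.span ℝ (Set.range b) ⊓ ℓ' = ⊥ := by
  obtain ⟨b₀, hb₀⟩ := hne
  -- a complement of ℓ'
  obtain ⟨ℓ'', hcompl⟩ := Submodule.exists_isCompl ℓ'
  have hfr : Module.finrank ℝ (Fin k → ℝ) = k := Module.finrank_fin_fun ℝ
  have hdim'' : Module.finrank ℝ ℓ'' = k - j := by
    have := Submodule.finrank_add_eq_of_isCompl hcompl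
    omega
  -- bases
  let cb := (Module.finBasis ℝ ℓ').reindex (finCongr (by rw [hℓ']))
  let bb := (Module.finBasis ℝ ℓ'').reindex (finCongr (by rw [hdim'']))
  let c : Fin j → (Fin k → ℝ) := fun i => (cb i : Fin k → ℝ)
  let b₁ : Fin (k - j) → (Fin k → ℝ) := fun i => (bb i : Fin k → ℝ)
  have hc_li : LinearIndependent ℝ c :=
    cb.linearIndependent.map' ℓ'.subtype (Submodule.ker_subtype ℓ')
  have hb₁_li : LinearIndependent ℝ b₁ :=
    bb.linearIndependent.map' ℓ''.subtype (Submodule.ker_subtype ℓ'')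
  have hc_span : Submodule.span ℝ (Set.range c) = ℓ' := by
    have : Set.range c = ℓ'.subtype '' Set.range cb := Set.range_comp _ _
    rw [this, Submodule.span_image, cb.span_eq, Submodule.map_subtype_top]
  have hb₁_span : Submodule.span ℝ (Set.range b₁) = ℓ'' := by
    have : Set.range b₁ = ℓ''.subtype '' Set.range bb := Set.range_comp _ _
    rw [this, Submodule.span_image, bb.span_eq, Submodule.map_subtype_top]
  have h1 : LinearIndependent ℝ (Sum.elim b₁ c) := by
    rw [linearIndependent_sum]
    refine ⟨hb₁_li, hc_li, ?_⟩
    simp only [Sum.elim_comp_inl, Sum.elim_comp_inr]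
    rw [hb₁_span, hc_span]
    exact hcompl.symm.disjoint
  -- the path
  set f : ℝ → (Fin (k - j) → (Fin k → ℝ)) := fun t i => b₀ i + t • (b₁ i - b₀ i) with hf_def
  have hf : Continuous f := by fun_prop
  have hf0 : f 0 = b₀ := by funext i; simp [hf_def]
  have hmem : f ⁻¹' U ∈ nhds (0 : ℝ) := (hU.preimage hf).mem_nhds (by simp [hf0, hb₀])
  obtain ⟨ε, hε, hball⟩ := Metric.mem_nhds_iff.1 hmem
  -- index equivalence and families
  let e : (Fin (k - j) ⊕ Fin j) ≃ Fin k := finSumFinEquiv.trans (finCongr (by omega))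
  let w : ℝ → Fin k → (Fin k → ℝ) := fun t => (Sum.elim (f t) c) ∘ e.symm
  have hw_affine : ∀ t i i', w t i i' = w 0 i i' + t * (w 1 i i' - w 0 i i') := by
    intro t i i'
    simp only [w, Function.comp]
    rcases h : e.symm i with i₀ | i₀ <;> simp [hf_def] <;> ring
  have hf1 : f 1 = b₁ := by funext i i'; simp [hf_def]
  -- the polynomial
  let N : Matrix (Fin k) (Fin k) ℝ[X] :=
    Matrix.of fun i i' => C (w 0 i i') + X * C (w 1 i i' - w 0 i i')
  let p : ℝ[X] := N.det
  have heval : ∀ t, p.eval t = (Matrix.of (w t)).det := by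
    intro t
    have h : p.eval t = ((evalRingHom t).mapMatrix N).det := by
      rw [← coe_evalRingHom]; exact RingHom.map_det _ _
    rw [h]
    congr 1
    ext i i'
    simp [N, hw_affine t i i', mul_comm]
  have hdet1 : (Matrix.of (w 1)).det ≠ 0 := by
    have hw1 : LinearIndependent ℝ (w 1) := by
      rw [show w 1 = (Sum.elim b₁ c) ∘ e.symm by simp [w, hf1]]
      exact (linearIndependent_equiv e.symm).2 h1
    have : IsUnit (Matrix.of (w 1)) :=
      Matrix.linearIndependent_rows_iff_isUnit.1 hw1
    exact ((Matrix.isUnit_iff_isUnit_det _).1 this).ne_zero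
  have hp : p ≠ 0 := fun h => hdet1 (by rw [← heval 1, h, eval_zero])
  -- choose t
  obtain ⟨t, ht, htroot⟩ := (Set.Ioo_infinite hε).exists_notMem_finite
    (Polynomial.finite_setOf_isRoot hp)
  have htU : f t ∈ U := hball (by
    simp only [Metric.mem_ball, Real.dist_eq, sub_zero]
    rw [abs_of_pos ht.1]; exact ht.2)
  have hwt : LinearIndependent ℝ (w t) := by
    have hdet : (Matrix.of (w t)).det ≠ 0 := by rw [← heval t]; exact htroot
    exact Matrix.linearIndependent_rows_iff_isUnit.2
      ((Matrix.isUnit_iff_isUnit_det _).2 (isUnit_iff_ne_zero.2 hdet))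
  have hsum : LinearIndependent ℝ (Sum.elim (f t) c) := by
    rw [← linearIndependent_equiv e.symm]
    exact hwt
  obtain ⟨hbli, -, hdisj⟩ := linearIndependent_sum.1 hsum
  rw [Sum.elim_comp_inl] at hbli
  refine ⟨f t, htU, hbli, ?_⟩
  simp only [Sum.elim_comp_inl, Sum.elim_comp_inr] at hdisj
  rw [hc_span] at hdisj
  exact disjoint_iff.1 hdisj
end

section
/- Let P_1 = ∑_{i=1}^{k} ∏_{j=1}^{d} (X_i − j)^2 and P_2 = (X_{k+1} − 1)(X_{k+1} − 2) in R[X_1,…,X_{k+1}]. Then the common real zero set of {P_1, P_2} has exactly 2·d^k connected components (isolated points), while the product of the degrees of P_1 and P_2 is 2d·2 = 4d; in particular for k ≥ 2 and d ≥ 3 the number of connected components exceeds the product of the degrees. -/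
open Set

lemma card_connectedComponents_of_discrete {X : Type*} [TopologicalSpace X]
    [TotallyDisconnectedSpace X] :
    Nat.card (ConnectedComponents X) = Nat.card X := by
  refine (Nat.card_eq_of_bijective (ConnectedComponents.mk : X → ConnectedComponents X)
    ⟨fun x y h => ?_, ConnectedComponents.surjective_coe⟩).symm
  have := ConnectedComponents.coe_eq_coe'.mp h
  rwa [totallyDisconnectedSpace_iff_connectedComponent_singleton.mp ‹_› y,
    mem_singleton_iff] at this

/-- Failure of a "Bezout-type" bound for real algebraic sets: for
`P₁ = ∑_{i=1}^{k} ∏_{j=1}^{d} (X_i − j)²` and `P₂ = (X_{k+1} − 1)(X_{k+1} − 2)`, the common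
real zero set of `{P₁, P₂}` in `ℝ^{k+1}` has exactly `2·d^k` connected components, while the
product of the degrees is `2d·2 = 4d`; for `k ≥ 2` and `d ≥ 3` the number of connected
components exceeds the product of the degrees. -/
theorem stmt_10 (k d : ℕ) :
    Nat.card (ConnectedComponents
        ({x : Fin (k + 1) → ℝ |
          ∑ i : Fin k, (∏ j ∈ Finset.Icc 1 d, (x i.castSucc - (j : ℝ))) ^ 2 = 0 ∧
          (x (Fin.last k) - 1) * (x (Fin.last k) - 2) = 0} :
          Set (Fin (k + 1) → ℝ))) = 2 * d ^ k ∧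
    (2 ≤ k → 3 ≤ d → 2 * d * 2 < 2 * d ^ k) := by
  constructor
  · set C : Set ℝ := Nat.cast '' (Finset.Icc 1 d : Finset ℕ) with hC
    set T : Fin (k + 1) → Set ℝ := Fin.lastCases {1, 2} (fun _ => C) with hT
    have hTlast : T (Fin.last k) = {1, 2} := by simp [hT]
    have hTcast : ∀ i : Fin k, T i.castSucc = C := fun i => by simp [hT]
    have hS : ({x : Fin (k + 1) → ℝ |
          ∑ i : Fin k, (∏ j ∈ Finset.Icc 1 d, (x i.castSucc - (j : ℝ))) ^ 2 = 0 ∧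
          (x (Fin.last k) - 1) * (x (Fin.last k) - 2) = 0} : Set (Fin (k + 1) → ℝ))
        = Set.univ.pi T := by
      ext x
      simp only [mem_setOf_eq, mem_pi, mem_univ, forall_true_left]
      rw [Fin.forall_iff_castSucc]
      rw [and_comm]
      apply and_congr
      · rw [hTlast, mem_insert_iff, mem_singleton_iff, mul_eq_zero, sub_eq_zero, sub_eq_zero]
      · rw [Finset.sum_eq_zero_iff_of_nonneg (fun i _ => sq_nonneg _)]
        apply forall_congr'
        intro i
        rw [hTcast i]
        simp only [Finset.mem_univ, forall_true_left, pow_eq_zero_iff two_ne_zero,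
          Finset.prod_eq_zero_iff, sub_eq_zero, hC, mem_image, Finset.mem_coe]
        constructor
        · rintro ⟨j, hj, h⟩; exact ⟨j, hj, h.symm⟩
        · rintro ⟨j, hj, h⟩; exact ⟨j, hj, h.symm⟩
    rw [hS]
    have hfin : ∀ m, (T m).Finite := by
      intro m
      induction m using Fin.lastCases with
      | last => rw [hTlast]; exact (finite_singleton 2).insert 1
      | cast i => rw [hTcast i]; exact ((Finset.Icc 1 d).finite_toSet.image _)
    have hSfin : (Set.univ.pi T).Finite := Set.Finite.pi hfin
    haveI := hSfin.to_subtype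
    rw [card_connectedComponents_of_discrete]
    rw [Nat.card_congr (Equiv.Set.univPi T), Nat.card_pi]
    rw [Fin.prod_univ_castSucc]
    have hcC : ∀ i : Fin k, Nat.card (T i.castSucc) = d := by
      intro i
      rw [hTcast i, Nat.card_coe_set_eq, hC,
        Set.ncard_image_of_injective _ Nat.cast_injective, Set.ncard_coe_finset,
        Nat.card_Icc]
      omega
    have hcL : Nat.card (T (Fin.last k)) = 2 := by
      rw [hTlast, Nat.card_coe_set_eq, Set.ncard_pair (by norm_num : (1 : ℝ) ≠ 2)]
    rw [hcL, Finset.prod_congr rfl (fun i _ => hcC i), Finset.prod_const,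
      Finset.card_univ, Fintype.card_fin]
    ring
  · intro hk hd
    have h1 : d ^ 2 ≤ d ^ k := Nat.pow_le_pow_right (by omega) hk
    nlinarith [h1]
end
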